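/- Let C be a linear [n,k] code over F_{q^2} with parity check matrix H, and let H† denote the conjugate transpose of H where conjugation is a ↦ a^q. Then rank(H·H†) = n - k - dim(C ∩ C^{⊥h}), where C^{⊥h} is the Hermitian dual of C. In particular this rank is independent of the choice of H. -/

import Mathlib

def hermDual {F : Type*} [Field F] {ι : Type*} [Fintype ι] (q : ℕ)
    (C : Submodule F (ι → F)) : Submodule F (ι → F) where
  carrier := {v | ∀ w ∈ C, ∑ i, v i * (w i) ^ q = 0}
  add_mem' := by
    intro a b ha hb w hw
    simp only [Set.mem_setOf_eq] at *
    simp [Pi.add_apply, add_mul, Finset.sum_add_distrib, ha w hw, hb w hw]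
  zero_mem' := by intro w hw; simp
  smul_mem' := by
    intro c a ha w hw
    simp only [Set.mem_setOf_eq] at *
    simp [Pi.smul_apply, smul_eq_mul, mul_assoc, ← Finset.mul_sum, ha w hw]

/-- Let `C` be an `[n,k]` linear code over `F_{q^2}` with parity check matrix `H`
(a full-rank `(n-k) × n` matrix whose conjugated rows form a basis of the Hermitian dual
`C^{⊥h}`, conjugation being `a ↦ a^q`).  Then `rank (H * H†) = n - k - dim (C ⊓ C^{⊥h})`;
in particular it does not depend on the choice of `H`. -/
theorem stmt3 {F : Type*} [Field F] [Fintype F] {q n k : ℕ}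
    (hq : Fintype.card F = q ^ 2) (hkn : k ≤ n)
    (C : Submodule F (Fin n → F)) (hC : Module.finrank F C = k)
    (H : Matrix (Fin (n - k)) (Fin n) F)
    (hind : LinearIndependent F (fun i => H i))
    (hspan : Submodule.span F (Set.range (fun i j => (H i j) ^ q)) = hermDual q C) :
    (H * (H.map (· ^ q)).transpose).rank
      = n - k - Module.finrank F ↥(C ⊓ hermDual q C) := by
  classical
  have hq0 : q ≠ 0 := by
    rintro rfl
    rw [pow_two, Nat.mul_zero] at hq
    exact Fintype.card_ne_zero hq
  obtain ⟨p, s, hp, hcharP, hqe⟩ : ∃ p s, Nat.Prime p ∧ CharP F p ∧ q = p ^ s := by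
    obtain ⟨m, hp, hcard⟩ := FiniteField.card F (ringChar F)
    have hdvd : q ∣ (ringChar F) ^ (m : ℕ) := ⟨q, by rw [← hcard, hq, pow_two]⟩
    obtain ⟨s, _, hqs⟩ := (Nat.dvd_prime_pow hp).mp hdvd
    exact ⟨ringChar F, s, hp, ringChar.charP F, hqs⟩
  haveI := hcharP
  haveI : ExpChar F p := ExpChar.prime hp
  have hsum : ∀ {ι : Type} (t : Finset ι) (f : ι → F),
      (∑ i ∈ t, f i) ^ q = ∑ i ∈ t, (f i) ^ q := by
    intro ι t f
    rw [hqe]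
    exact sum_pow_char_pow p s t f
  have hpowq : ∀ x : F, (x ^ q) ^ q = x := fun x => by
    rw [← pow_mul, ← pow_two, ← hq, FiniteField.pow_card]
  have hzero : ∀ x : F, x ^ q = 0 → x = 0 := fun x h => (pow_eq_zero_iff hq0).mp h
  set Hb : Matrix (Fin n) (Fin (n - k)) F := (H.map (· ^ q)).transpose with hHb
  -- rows of the conjugate matrix are linearly independent
  have hindb : LinearIndependent F (fun i j => (H i j) ^ q) := by
    rw [Fintype.linearIndependent_iff] at hind ⊢
    intro g hg i
    apply hzero
    refine hind (fun l => g l ^ q) ?_ i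
    funext j
    have h1 : ∑ l, g l * (H l j) ^ q = 0 := by
      have h0 := congrFun hg j
      simpa using h0
    have : (∑ l, g l * (H l j) ^ q) ^ q = ∑ l, g l ^ q * H l j := by
      rw [hsum]
      refine Finset.sum_congr rfl fun l _ => ?_
      rw [mul_pow, hpowq]
    rw [h1, zero_pow hq0] at this
    simpa using this.symm
  -- the kernel of H is exactly C
  have hCle : C ≤ LinearMap.ker H.mulVecLin := by
    intro v hv
    rw [LinearMap.mem_ker]
    funext i
    show H.mulVec v i = 0
    have hu : (fun j => H i j ^ q) ∈ hermDual q C := by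
      rw [← hspan]; exact Submodule.subset_span ⟨i, rfl⟩
    have h1 : ∑ l, (H i l) ^ q * (v l) ^ q = 0 := hu v hv
    apply hzero
    show (∑ l, H i l * v l) ^ q = 0
    rw [hsum]
    rw [← h1]
    refine Finset.sum_congr rfl fun l _ => ?_
    rw [mul_pow]
  have hrankH : Module.finrank F (LinearMap.range H.mulVecLin) = n - k := by
    have h1 : H.rank = n - k := by
      rw [← Matrix.rank_transpose]
      show Module.finrank F (LinearMap.range (H.transpose).mulVecLin) = n - k
      rw [Matrix.range_mulVecLin, Matrix.col_transpose, Matrix.row_def, finrank_span_eq_card hind,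
        Fintype.card_fin]
    exact h1
  have hkerC : LinearMap.ker H.mulVecLin = C := by
    refine (Submodule.eq_of_le_of_finrank_le hCle ?_).symm
    have h2 := LinearMap.finrank_range_add_finrank_ker H.mulVecLin
    rw [Module.finrank_fin_fun, hrankH] at h2
    rw [hC]
    omega
  -- range of conjugate transpose is the hermitian dual
  have hrangeg : LinearMap.range Hb.mulVecLin = hermDual q C := by
    rw [hHb, Matrix.range_mulVecLin, Matrix.col_transpose, ← hspan]
    rfl
  have hdimD : Module.finrank F (hermDual q C) = n - k := by
    rw [← hspan, finrank_span_eq_card hindb, Fintype.card_fin]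
  -- assemble
  set D := hermDual q C with hD
  set φ : D →ₗ[F] (Fin (n - k) → F) := H.mulVecLin ∘ₗ D.subtype with hφ
  have hrange : LinearMap.range φ = Submodule.map H.mulVecLin D := by
    rw [hφ, LinearMap.range_comp, Submodule.range_subtype]
  have hkerφ : LinearMap.ker φ = Submodule.comap D.subtype (C ⊓ D) := by
    rw [hφ, LinearMap.ker_comp, hkerC]
    ext x
    simp only [Submodule.mem_comap, Submodule.mem_inf]
    exact ⟨fun h => ⟨h, x.2⟩, fun h => h.1⟩
  have hkerdim : Module.finrank F (LinearMap.ker φ) = Module.finrank F ↥(C ⊓ D) := by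
    rw [hkerφ]
    exact (Submodule.comapSubtypeEquivOfLe inf_le_right).finrank_eq
  have hrn := LinearMap.finrank_range_add_finrank_ker φ
  rw [hkerdim, hrange] at hrn
  have hDd : Module.finrank F D = n - k := hdimD
  rw [hDd] at hrn
  have hrank : (H * Hb).rank = Module.finrank F (Submodule.map H.mulVecLin D) := by
    show Module.finrank F (LinearMap.range (H * Hb).mulVecLin) = _
    rw [Matrix.mulVecLin_mul, LinearMap.range_comp, hrangeg]
  rw [hrank]
  omega
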